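/- arXiv:math/0609072 — 2 statements merged into one kernel-verified Lean document; each statement's English description precedes it below -/
import Mathlib

section
/- Let L = [b_1, …, b_r] be a nonempty list of integers, all entries at least 2, such that hj(L) = d·n²/(d·n·a−1) for some integers d ≥ 1 and n > a ≥ 1 with gcd(n, a) = 1. Then each of the two lists [2, b_1, …, b_{r−1}, b_r + 1] and [b_1 + 1, b_2, …, b_r, 2] has all entries at least 2 and Hirzebruch–Jung value of the form d·n'²/(d·n'·a'−1) for some integers n' > a' ≥ 1 with gcd(n', a') = 1 (with the same d). This is the numerical content of Proposition 2.2(2): the two operations on resolution strings preserve the class of strings resolving singularities of class T. -/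
/-- Hirzebruch–Jung continued fraction value of a list of integers, computed in ℚ
with its total inverse: `hj [b] = b` and `hj (b :: l) = b - (hj l)⁻¹`. -/
def hj : List ℤ → ℚ
  | [] => 0
  | b :: l => (b : ℚ) - (hj l)⁻¹

/-- Add 1 to the last entry of a list of integers. -/
def addLast : List ℤ → List ℤ
  | [] => []
  | [b] => [b + 1]
  | b :: l => b :: addLast l

/-- Add 1 to the first entry of a list of integers. -/
def addHead : List ℤ → List ℤ
  | [] => []
  | b :: l => (b + 1) :: l

def cf : List ℤ → ℤ × ℤ
  | [] => (1, 0)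
  | b :: l => (b * (cf l).1 - (cf l).2, (cf l).1)

def cfD : List ℤ → ℤ × ℤ
  | [] => (1, 0)
  | [_] => (1, 0)
  | b :: l => (b * (cfD l).1 - (cfD l).2, (cfD l).1)

lemma cf_cons (b : ℤ) (l : List ℤ) :
    cf (b :: l) = (b * (cf l).1 - (cf l).2, (cf l).1) := rfl

lemma cfD_cc (b c : ℤ) (l : List ℤ) :
    cfD (b :: c :: l) = (b * (cfD (c :: l)).1 - (cfD (c :: l)).2, (cfD (c :: l)).1) := rfl

lemma cf_pos : ∀ l : List ℤ, (∀ b ∈ l, 2 ≤ b) → 0 ≤ (cf l).2 ∧ (cf l).2 < (cf l).1 := by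
  intro l
  induction l with
  | nil => intro _; simp [cf]
  | cons b l ih =>
    intro h
    obtain ⟨h1, h2⟩ := ih (fun x hx => h x (List.mem_cons_of_mem _ hx))
    have hb : 2 ≤ b := h b (List.mem_cons_self)
    rw [cf_cons]
    simp only []
    constructor
    · linarith
    · nlinarith

lemma hj_eq (l : List ℤ) (h : ∀ b ∈ l, 2 ≤ b) : hj l = ((cf l).1 : ℚ) / (cf l).2 := by
  induction l with
  | nil => simp [hj, cf]
  | cons b l ih =>
    have h' : ∀ x ∈ l, 2 ≤ x := fun x hx => h x (List.mem_cons_of_mem _ hx)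
    obtain ⟨h1, h2⟩ := cf_pos l h'
    have hn0 : (cf l).1 ≠ 0 := by omega
    have hn : ((cf l).1 : ℚ) ≠ 0 := Int.cast_ne_zero.mpr hn0
    rw [hj, ih h', inv_div, cf_cons]
    simp only []
    push_cast
    field_simp

lemma cf_det : ∀ (l : List ℤ) (b : ℤ),
    (cfD (b :: l)).1 * (cf (b :: l)).2 - (cf (b :: l)).1 * (cfD (b :: l)).2 = 1 := by
  intro l
  induction l with
  | nil => intro b; simp [cf, cfD]
  | cons c l ih =>
    intro b
    rw [cf_cons b (c :: l), cfD_cc b c l]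
    simp only []
    linear_combination ih c

lemma cfD_bounds : ∀ (l : List ℤ) (b : ℤ), (∀ x ∈ b :: l, 2 ≤ x) →
    0 ≤ (cfD (b :: l)).2 ∧ (cfD (b :: l)).2 < (cfD (b :: l)).1 ∧
    1 ≤ (cf (b :: l)).2 - (cfD (b :: l)).2 ∧
    (cf (b :: l)).2 - (cfD (b :: l)).2 ≤ (cf (b :: l)).1 - (cfD (b :: l)).1 := by
  intro l
  induction l with
  | nil =>
    intro b h
    have hb : 2 ≤ b := h b (List.mem_cons_self)
    simp [cf, cfD]
    omega
  | cons c l ih =>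
    intro b h
    have hb : 2 ≤ b := h b (List.mem_cons_self)
    obtain ⟨i1, i2, i3, i4⟩ := ih c (fun x hx => h x (List.mem_cons_of_mem _ hx))
    rw [cf_cons b (c :: l), cfD_cc b c l]
    simp only []
    have p1 : 2 * (cfD (c :: l)).1 ≤ b * (cfD (c :: l)).1 :=
      mul_le_mul_of_nonneg_right hb (by linarith)
    have p2 : 2 * ((cf (c :: l)).1 - (cfD (c :: l)).1) ≤ b * ((cf (c :: l)).1 - (cfD (c :: l)).1) :=
      mul_le_mul_of_nonneg_right hb (by linarith)
    refine ⟨by linarith, by linarith, by linarith, by nlinarith⟩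

lemma cf_addLast : ∀ (l : List ℤ) (b : ℤ),
    cf (addLast (b :: l)) =
      ((cf (b :: l)).1 + (cfD (b :: l)).1, (cf (b :: l)).2 + (cfD (b :: l)).2) := by
  intro l
  induction l with
  | nil => intro b; simp [addLast, cf, cfD]
  | cons c l ih =>
    intro b
    have e : addLast (b :: c :: l) = b :: addLast (c :: l) := rfl
    rw [e, cf_cons b (addLast (c :: l)), ih c, cf_cons b (c :: l), cfD_cc b c l,
      Prod.mk.injEq]
    simp only []
    ring_nf; exact ⟨trivial, trivial⟩

lemma cf_append2 : ∀ (l : List ℤ) (b : ℤ),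
    cf ((b :: l) ++ [2]) =
      (2 * (cf (b :: l)).1 - (cfD (b :: l)).1, 2 * (cf (b :: l)).2 - (cfD (b :: l)).2) := by
  intro l
  induction l with
  | nil => intro b; simp [cf, cfD]; ring
  | cons c l ih =>
    intro b
    have e : (b :: c :: l) ++ [2] = b :: ((c :: l) ++ [2]) := rfl
    rw [e, cf_cons b ((c :: l) ++ [2]), ih c, cf_cons b (c :: l), cfD_cc b c l,
      Prod.mk.injEq]
    simp only []
    ring_nf; exact ⟨trivial, trivial⟩

lemma cf_addHead (b : ℤ) (l : List ℤ) :
    cf ((b + 1) :: l) = ((cf (b :: l)).1 + (cf (b :: l)).2, (cf (b :: l)).2) := by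
  rw [cf_cons (b + 1) l, cf_cons b l, Prod.mk.injEq]
  simp only []
  ring_nf; exact ⟨trivial, trivial⟩

lemma cfD_addHead (b : ℤ) (l : List ℤ) :
    cfD ((b + 1) :: l) = ((cfD (b :: l)).1 + (cfD (b :: l)).2, (cfD (b :: l)).2) := by
  cases l with
  | nil => simp [cfD]
  | cons c l =>
    rw [cfD_cc (b + 1) c l, cfD_cc b c l, Prod.mk.injEq]
    simp only []
    ring_nf; exact ⟨trivial, trivial⟩

lemma addLast_mem : ∀ l : List ℤ, (∀ x ∈ l, 2 ≤ x) → ∀ x ∈ addLast l, 2 ≤ x := by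
  intro l
  induction l with
  | nil => intro _ x hx; simp [addLast] at hx
  | cons b l ih =>
    intro h x hx
    cases l with
    | nil =>
      simp [addLast] at hx
      have := h b (List.mem_cons_self)
      omega
    | cons c l =>
      rcases hx with _ | hx
      · exact h b (List.mem_cons_self)
      · exact ih (fun y hy => h y (List.mem_cons_of_mem _ hy)) x (by assumption)


/-- Proposition 2.2(2), numerically: if `L = [b₁, …, b_r]` is a nonempty list of integers
with all entries at least 2 and `hj L = d·n²/(d·n·a−1)` with `d ≥ 1`, `n > a ≥ 1`,
`gcd(n, a) = 1`, then each of the lists `[2, b₁, …, b_{r−1}, b_r + 1]` and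
`[b₁ + 1, b₂, …, b_r, 2]` has all entries at least 2 and Hirzebruch–Jung value of the
form `d·n'²/(d·n'·a'−1)` with `n' > a' ≥ 1`, `gcd(n', a') = 1` (same `d`). -/
theorem hj_classT_step (L : List ℤ) (hne : L ≠ []) (hL : ∀ b ∈ L, 2 ≤ b)
    (d n a : ℤ) (hd : 1 ≤ d) (hna : a < n) (ha : 1 ≤ a) (hcop : Int.gcd n a = 1)
    (hval : hj L = (d * n ^ 2 : ℚ) / (d * n * a - 1)) :
    ∀ L' ∈ [2 :: addLast L, addHead L ++ [2]],
      (∀ b ∈ L', 2 ≤ b) ∧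
      ∃ n' a' : ℤ, a' < n' ∧ 1 ≤ a' ∧ Int.gcd n' a' = 1 ∧
        hj L' = (d * n' ^ 2 : ℚ) / (d * n' * a' - 1) := by
  obtain ⟨b, l, rfl⟩ : ∃ b l, L = b :: l := by
    cases L with
    | nil => exact absurd rfl hne
    | cons b l => exact ⟨b, l, rfl⟩
  clear hne
  have hn2 : 2 ≤ n := by omega
  obtain ⟨hQ0, hQP⟩ := cf_pos (b :: l) hL
  obtain ⟨i1, i2, i3, i4⟩ := cfD_bounds l b hL
  have det := cf_det l b
  have hj0 := hj_eq (b :: l) hL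
  have eAL := cf_addLast l b
  have eAP := cf_append2 l (b + 1)
  have eAH := cf_addHead b l
  have eAHD := cfD_addHead b l
  obtain ⟨P, Q, X, Y, hcf, hcfD⟩ :
      ∃ P Q X Y, cf (b :: l) = (P, Q) ∧ cfD (b :: l) = (X, Y) := ⟨_, _, _, _, rfl, rfl⟩
  simp only [hcf, hcfD] at hQ0 hQP i1 i2 i3 i4 det hj0 eAL eAP eAH eAHD
  -- identify P and Q
  have h2na : 2 ≤ n * a := by
    have := mul_le_mul_of_nonneg_left ha (by omega : (0:ℤ) ≤ n)
    linarith
  have h3' : 1 * (n * a) ≤ d * (n * a) := mul_le_mul_of_nonneg_right hd (by linarith)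
  have hDpos : (0 : ℤ) < d * n * a - 1 := by linarith
  have hQ1 : (1 : ℤ) ≤ Q := by linarith
  have hQne : ((Q : ℚ)) ≠ 0 := by
    exact_mod_cast (by omega : Q ≠ 0)
  have hDne : ((d : ℚ) * n * a - 1) ≠ 0 := by
    have : ((d * n * a - 1 : ℤ) : ℚ) ≠ 0 := Int.cast_ne_zero.mpr (by omega)
    push_cast at this
    convert this using 1
  have hval' : (P : ℚ) / Q = ((d : ℚ) * n ^ 2) / ((d : ℚ) * n * a - 1) := by
    rw [← hj0]; exact hval
  have key : P * (d * n * a - 1) = d * n ^ 2 * Q := by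
    have := (div_eq_div_iff hQne hDne).mp hval'
    exact_mod_cast this
  have copPQ : IsCoprime P Q := ⟨-Y, X, by linear_combination det⟩
  have copD : IsCoprime (d * n ^ 2) (d * n * a - 1) :=
    ⟨d * a ^ 2, -(d * n * a + 1), by ring⟩
  have h1 : P ∣ d * n ^ 2 :=
    copPQ.dvd_of_dvd_mul_right ⟨d * n * a - 1, key.symm⟩
  have h2 : d * n ^ 2 ∣ P :=
    copD.dvd_of_dvd_mul_right ⟨Q, key⟩
  have hP : P = d * n ^ 2 :=
    Int.dvd_antisymm (by linarith) (by positivity) h1 h2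
  have hQe : Q = d * n * a - 1 := by
    have h3 : d * n ^ 2 * Q = d * n ^ 2 * (d * n * a - 1) := by
      rw [← key, hP]
    have hdn2 : (d * n ^ 2 : ℤ) ≠ 0 := by positivity
    exact mul_left_cancel₀ hdn2 h3
  -- identify X and Y
  have cand : (d * n * (n - a) - 1) * Q - P * (d * a * (n - a) - 1) = 1 := by
    rw [hP, hQe]; ring
  have hY : Y = d * a * (n - a) - 1 := by
    have hdvd : Q ∣ P * (Y - (d * a * (n - a) - 1)) :=
      ⟨X - (d * n * (n - a) - 1), by linear_combination cand - det⟩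
    have hdvd2 : Q ∣ (Y - (d * a * (n - a) - 1)) :=
      (copPQ.symm).dvd_of_dvd_mul_left hdvd
    have hY0b : 0 ≤ d * a * (n - a) - 1 := by
      have h5 : a * 1 ≤ a * (n - a) :=
        mul_le_mul_of_nonneg_left (by omega) (by omega)
      have h6 : 1 * (a * (n - a)) ≤ d * (a * (n - a)) :=
        mul_le_mul_of_nonneg_right hd (by linarith)
      linarith
    have hY1b : d * a * (n - a) - 1 ≤ Q - 1 := by
      rw [hQe]
      have h5 : a * 1 ≤ a * a := mul_le_mul_of_nonneg_left ha (by omega)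
      have h6 : 1 * (a * a) ≤ d * (a * a) :=
        mul_le_mul_of_nonneg_right hd (by linarith)
      linarith
    obtain ⟨k, hk⟩ := hdvd2
    have hk0 : k = 0 := by
      rcases lt_trichotomy k 0 with hk' | hk' | hk'
      · have hk1 : k ≤ -1 := by omega
        have hm1 : Q * k ≤ Q * (-1) := mul_le_mul_of_nonneg_left hk1 (by linarith)
        linarith
      · exact hk'
      · have hk1 : 1 ≤ k := by omega
        have hm1 : Q * 1 ≤ Q * k := mul_le_mul_of_nonneg_left hk1 (by linarith)
        linarith
    rw [hk0, mul_zero] at hk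
    linarith
  have hX : X = d * n * (n - a) - 1 := by
    have h4 : X * Q = (d * n * (n - a) - 1) * Q := by
      linear_combination det - cand + P * hY
    exact mul_right_cancel₀ (by omega : Q ≠ 0) h4
  -- coprimality input
  have copna : IsCoprime n a := Int.isCoprime_iff_gcd_eq_one.mpr hcop
  obtain ⟨u, v, huv⟩ := copna
  -- the two cases
  intro L' hm
  simp only [List.mem_cons, List.not_mem_nil, or_false] at hm
  rcases hm with rfl | rfl
  · -- L' = 2 :: addLast (b :: l)
    have hmem : ∀ x ∈ 2 :: addLast (b :: l), 2 ≤ x := by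
      intro x hx
      rw [List.mem_cons] at hx
      rcases hx with rfl | hx
      · exact le_refl 2
      · exact addLast_mem (b :: l) hL x hx
    refine ⟨hmem, 2 * n - a, n, by omega, by omega, ?_, ?_⟩
    · exact Int.isCoprime_iff_gcd_eq_one.mp ⟨-v, u + 2 * v, by linear_combination huv⟩
    · have e1 : cf (2 :: addLast (b :: l)) = (2 * (P + X) - (Q + Y), P + X) := by
        rw [cf_cons 2 (addLast (b :: l)), eAL]
      rw [hj_eq _ hmem, e1]
      simp only []
      rw [hP, hQe, hX, hY]
      have c1 : 2 * (d * n ^ 2 + (d * n * (n - a) - 1)) - (d * n * a - 1 + (d * a * (n - a) - 1))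
          = d * (2 * n - a) ^ 2 := by ring
      have c2 : d * n ^ 2 + (d * n * (n - a) - 1) = d * (2 * n - a) * n - 1 := by ring
      rw [c1, c2]
      push_cast
      ring
  · -- L' = addHead (b :: l) ++ [2]
    have hmem : ∀ x ∈ addHead (b :: l) ++ [2], 2 ≤ x := by
      intro x hx
      rw [List.mem_append] at hx
      rcases hx with hx | hx
      · have e0 : addHead (b :: l) = (b + 1) :: l := rfl
        rw [e0, List.mem_cons] at hx
        rcases hx with rfl | hx
        · have := hL b (List.mem_cons_self); omega
        · exact hL x (List.mem_cons_of_mem _ hx)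
      · simp at hx; omega
    refine ⟨hmem, n + a, a, by omega, ha, ?_, ?_⟩
    · exact Int.isCoprime_iff_gcd_eq_one.mp ⟨u, v - u, by linear_combination huv⟩
    · have e0 : addHead (b :: l) = (b + 1) :: l := rfl
      have e1 : cf (addHead (b :: l) ++ [2]) = (2 * (P + Q) - (X + Y), 2 * Q - Y) := by
        rw [e0, eAP, eAH, eAHD]
      rw [hj_eq _ hmem, e1]
      simp only []
      rw [hP, hQe, hX, hY]
      have c1 : 2 * (d * n ^ 2 + (d * n * a - 1)) - ((d * n * (n - a) - 1) + (d * a * (n - a) - 1))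
          = d * (n + a) ^ 2 := by ring
      have c2 : 2 * (d * n * a - 1) - (d * a * (n - a) - 1) = d * (n + a) * a - 1 := by ring
      rw [c1, c2]
      push_cast
      ring
end

section
/- Let 𝒯 be the smallest set of nonempty lists of integers containing [4] and, for every m ≥ 0, the list [3, 2, …, 2, 3] with m twos in the middle, and closed under the two operations [b_1, …, b_r] ↦ [2, b_1, …, b_{r−1}, b_r + 1] and [b_1, …, b_r] ↦ [b_1 + 1, b_2, …, b_r, 2]. Then for all integers d ≥ 1 and n > a ≥ 1 with gcd(n, a) = 1, there exists a list L ∈ 𝒯 with hj(L) = d·n²/(d·n·a−1). (This is the numerical content of Proposition 2.2(3): every singularity of class T that is not a rational double point is obtained from the basic strings by iterating the two operations.) -/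
/-- The smallest set 𝒯 of lists of integers containing `[4]` and the lists
`[3, 2, …, 2, 3]` (with `m ≥ 0` twos in the middle), and closed under the operations
`[b₁, …, b_r] ↦ [2, b₁, …, b_{r−1}, b_r + 1]` and `[b₁, …, b_r] ↦ [b₁ + 1, b₂, …, b_r, 2]`. -/
inductive ClassT : List ℤ → Prop
  | base : ClassT [4]
  | basePair (m : ℕ) : ClassT (3 :: (List.replicate m 2 ++ [3]))
  | left {L : List ℤ} : ClassT L → ClassT (2 :: addLast L)
  | right {L : List ℤ} : ClassT L → ClassT (addHead L ++ [2])

/-- Continuant matrix (α, β, γ, δ) of a list: product of the matrices [[b,-1],[1,0]]. -/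
def cm : List ℤ → ℤ × ℤ × ℤ × ℤ
  | [] => (1, 0, 0, 1)
  | b :: l =>
    let m := cm l
    (b * m.1 - m.2.2.1, b * m.2.1 - m.2.2.2, m.1, m.2.1)

lemma cm_cons' {l : List ℤ} {α β γ δ : ℤ} (b : ℤ) (h : cm l = (α, β, γ, δ)) :
    cm (b :: l) = (b * α - γ, b * β - δ, α, β) := by
  show (b * (cm l).1 - (cm l).2.2.1, b * (cm l).2.1 - (cm l).2.2.2, (cm l).1, (cm l).2.1) = _
  rw [h]

lemma cm_addLast : ∀ (b : ℤ) (l : List ℤ),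
    cm (addLast (b :: l)) =
      ((cm (b :: l)).1 - (cm (b :: l)).2.1, (cm (b :: l)).2.1,
       (cm (b :: l)).2.2.1 - (cm (b :: l)).2.2.2, (cm (b :: l)).2.2.2) := by
  intro b l
  induction l generalizing b with
  | nil =>
      show cm [b + 1] = _
      have h0 : cm ([] : List ℤ) = (1, 0, 0, 1) := rfl
      rw [cm_cons' (b + 1) h0, cm_cons' b h0]
      simp only []
      rw [Prod.mk.injEq, Prod.mk.injEq, Prod.mk.injEq]
      refine ⟨by ring, by ring, by ring, by ring⟩
  | cons c l ih =>
      show cm (b :: addLast (c :: l)) = _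
      obtain ⟨α, β, γ, δ, h⟩ : ∃ α β γ δ, cm (c :: l) = (α, β, γ, δ) :=
        ⟨_, _, _, _, rfl⟩
      have h2 : cm (addLast (c :: l)) = (α - β, β, γ - δ, δ) := by
        rw [ih c, h]
      rw [cm_cons' b h2, cm_cons' b h]
      simp only []
      rw [Prod.mk.injEq, Prod.mk.injEq, Prod.mk.injEq]
      refine ⟨by ring, by ring, by ring, by ring⟩

lemma cm_addLast' {b : ℤ} {l : List ℤ} {α β γ δ : ℤ} (h : cm (b :: l) = (α, β, γ, δ)) :
    cm (addLast (b :: l)) = (α - β, β, γ - δ, δ) := by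
  rw [cm_addLast, h]

lemma cm_append_two : ∀ (X : List ℤ),
    cm (X ++ [2]) =
      (2 * (cm X).1 + (cm X).2.1, -(cm X).1,
       2 * (cm X).2.2.1 + (cm X).2.2.2, -(cm X).2.2.1) := by
  intro X
  induction X with
  | nil =>
      show cm [2] = _
      have h0 : cm ([] : List ℤ) = (1, 0, 0, 1) := rfl
      rw [cm_cons' 2 h0, h0]
      simp only []
      rw [Prod.mk.injEq, Prod.mk.injEq, Prod.mk.injEq]
      refine ⟨by ring, by ring, by ring, by ring⟩
  | cons b X ih =>
      show cm (b :: (X ++ [2])) = _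
      obtain ⟨α, β, γ, δ, h⟩ : ∃ α β γ δ, cm X = (α, β, γ, δ) := ⟨_, _, _, _, rfl⟩
      have h2 : cm (X ++ [2]) = (2 * α + β, -α, 2 * γ + δ, -γ) := by rw [ih, h]
      rw [cm_cons' b h2, cm_cons' b h]
      simp only []
      rw [Prod.mk.injEq, Prod.mk.injEq, Prod.mk.injEq]
      refine ⟨by ring, by ring, by ring, by ring⟩

lemma cm_right' {b : ℤ} {l : List ℤ} {α β γ δ : ℤ} (h : cm (b :: l) = (α, β, γ, δ)) :
    cm (addHead (b :: l) ++ [2]) =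
      (2 * (α + γ) + (β + δ), -(α + γ), 2 * γ + δ, -γ) := by
  show cm (((b + 1) :: l) ++ [2]) = _
  obtain ⟨α', β', γ', δ', h'⟩ : ∃ α' β' γ' δ', cm l = (α', β', γ', δ') := ⟨_, _, _, _, rfl⟩
  have hb : cm ((b + 1) :: l) = (α + γ, β + δ, γ, δ) := by
    have e := (cm_cons' b h').symm.trans h
    simp only [Prod.mk.injEq] at e
    obtain ⟨e1, e2, e3, e4⟩ := e
    rw [cm_cons' (b + 1) h', Prod.mk.injEq, Prod.mk.injEq, Prod.mk.injEq]
    exact ⟨by linear_combination e1 + e3, by linear_combination e2 + e4, e3, e4⟩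
  rw [cm_append_two, hb]

lemma cm_replicate (m : ℕ) :
    cm (List.replicate m 2 ++ [3]) =
      ((2 * m + 3 : ℤ), -((m : ℤ) + 1), (2 * m + 1 : ℤ), -(m : ℤ)) := by
  induction m with
  | zero =>
      show cm [3] = _
      have h0 : cm ([] : List ℤ) = (1, 0, 0, 1) := rfl
      rw [cm_cons' 3 h0]
      norm_num
  | succ k ih =>
      rw [List.replicate_succ, List.cons_append, cm_cons' 2 ih]
      rw [Prod.mk.injEq, Prod.mk.injEq, Prod.mk.injEq]
      refine ⟨by push_cast; ring, by push_cast; ring, by push_cast; ring, by push_cast; ring⟩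

lemma classT_ne_nil {L : List ℤ} (h : ClassT L) : L ≠ [] := by
  induction h with
  | base => simp
  | basePair m => simp
  | left _ _ => simp
  | right _ _ => simp

/-- Key invariant: class T realizes the full continuant matrix of (d,n,a). -/
lemma key : ∀ (N : ℕ) (d n a : ℤ), 1 ≤ d → 1 ≤ a → a < n → Int.gcd n a = 1 →
    n.toNat ≤ N →
    ∃ L : List ℤ, ClassT L ∧
      cm L = (d * n ^ 2, -(d * n * (n - a) - 1), d * n * a - 1, -(d * a * (n - a) - 1)) := by
  intro N
  induction N with
  | zero => intro d n a hd ha han _ hN; omega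
  | succ N ih =>
      intro d n a hd ha han hcop hN
      by_cases hn2 : n = 2
      · -- base case n = 2, a = 1
        subst hn2
        have ha1 : a = 1 := by omega
        subst ha1
        rcases eq_or_lt_of_le hd with hd1 | hd2
        · refine ⟨[4], ClassT.base, ?_⟩
          have h0 : cm ([] : List ℤ) = (1, 0, 0, 1) := rfl
          rw [cm_cons' 4 h0, ← hd1]
          norm_num
        · set m : ℕ := (d - 2).toNat with hm
          have hmd : (m : ℤ) = d - 2 := by omega
          refine ⟨3 :: (List.replicate m 2 ++ [3]), ClassT.basePair m, ?_⟩
          rw [cm_cons' 3 (cm_replicate m), Prod.mk.injEq, Prod.mk.injEq, Prod.mk.injEq]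
          refine ⟨by rw [hmd]; ring, by rw [hmd]; ring, by rw [hmd]; ring, by rw [hmd]; ring⟩
      · -- n > 2
        have hn3 : 3 ≤ n := by omega
        have h2a : 2 * a ≠ n := by
          intro h
          have h1 : a ∣ n := ⟨2, by omega⟩
          have h2 : (a : ℤ) ∣ (Int.gcd n a : ℤ) :=
            Int.dvd_coe_gcd h1 dvd_rfl
          rw [hcop] at h2
          have := Int.le_of_dvd (by norm_num) h2
          omega
        have hco : IsCoprime n a := Int.isCoprime_iff_gcd_eq_one.mpr hcop
        rcases lt_or_gt_of_ne h2a with hlt | hgt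
        · -- 2a < n : right operation from (d, n - a, a)
          have hcop' : Int.gcd (n - a) a = 1 := by
            rw [← Int.isCoprime_iff_gcd_eq_one]
            have h := hco.add_mul_left_left (-1)
            rwa [show n + a * -1 = n - a by ring] at h
          obtain ⟨L, hL, hcm⟩ := ih d (n - a) a hd ha (by omega) hcop' (by omega)
          obtain ⟨b, l, rfl⟩ : ∃ b l, L = b :: l := by
            cases L with
            | nil => exact absurd rfl (classT_ne_nil hL)
            | cons b l => exact ⟨b, l, rfl⟩
          refine ⟨addHead (b :: l) ++ [2], ClassT.right hL, ?_⟩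
          rw [cm_right' hcm, Prod.mk.injEq, Prod.mk.injEq, Prod.mk.injEq]
          refine ⟨by ring, by ring, by ring, by ring⟩
        · -- 2a > n : left operation from (d, a, 2a - n)
          have hcop' : Int.gcd a (2 * a - n) = 1 := by
            rw [← Int.isCoprime_iff_gcd_eq_one]
            have h := (hco.symm.neg_right).add_mul_left_right 2
            rwa [show -n + a * 2 = 2 * a - n by ring] at h
          obtain ⟨L, hL, hcm⟩ := ih d a (2 * a - n) hd (by omega) (by omega) hcop' (by omega)
          obtain ⟨b, l, rfl⟩ : ∃ b l, L = b :: l := by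
            cases L with
            | nil => exact absurd rfl (classT_ne_nil hL)
            | cons b l => exact ⟨b, l, rfl⟩
          refine ⟨2 :: addLast (b :: l), ClassT.left hL, ?_⟩
          rw [cm_cons' 2 (cm_addLast' hcm), Prod.mk.injEq, Prod.mk.injEq, Prod.mk.injEq]
          refine ⟨by ring, by ring, by ring, by ring⟩

lemma addLast_two_le : ∀ (X : List ℤ), (∀ c ∈ X, 2 ≤ c) → ∀ c ∈ addLast X, 2 ≤ c := by
  intro X
  induction X with
  | nil => simp [addLast]
  | cons x X ihX =>
      intro hX c hc
      cases X with
      | nil =>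
          simp [addLast] at hc
          have := hX x (by simp)
          omega
      | cons y Y =>
          rcases List.mem_cons.mp hc with rfl | hc
          · exact hX c (by simp)
          · exact ihX (fun c hc => hX c (List.mem_cons_of_mem _ hc)) c hc

lemma classT_two_le {L : List ℤ} (h : ClassT L) : ∀ b ∈ L, 2 ≤ b := by
  induction h with
  | base => intro b hb; simp at hb; omega
  | basePair m =>
      intro b hb
      simp [List.mem_append, List.mem_replicate] at hb
      rcases hb with h | h | h <;> omega
  | left _ ih =>
      intro b hb
      rcases List.mem_cons.mp hb with rfl | hb
      · norm_num
      · exact addLast_two_le _ ih b hb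
  | right _ ih =>
      rename_i L' _
      intro b hb
      rcases List.mem_append.mp hb with hb | hb
      · cases L' with
        | nil => simp [addHead] at hb
        | cons x X =>
            rcases List.mem_cons.mp hb with rfl | hb
            · have := ih x (by simp)
              omega
            · exact ih b (List.mem_cons_of_mem _ hb)
      · simp at hb; omega

lemma hj_eq_cm : ∀ (L : List ℤ), (∀ b ∈ L, 2 ≤ b) →
    (cm L).2.2.1 < (cm L).1 ∧ 0 ≤ (cm L).2.2.1 ∧
      hj L = ((cm L).1 : ℚ) / ((cm L).2.2.1 : ℚ) := by
  intro L
  induction L with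
  | nil =>
      intro _
      have h0 : cm ([] : List ℤ) = (1, 0, 0, 1) := rfl
      rw [h0]
      norm_num [hj]
  | cons b l ih =>
      intro h
      obtain ⟨h1, h2, h3⟩ := ih (fun c hc => h c (List.mem_cons_of_mem _ hc))
      have hb : 2 ≤ b := h b (by simp)
      have hα : 1 ≤ (cm l).1 := by omega
      have hc : cm (b :: l) =
          (b * (cm l).1 - (cm l).2.2.1, b * (cm l).2.1 - (cm l).2.2.2,
           (cm l).1, (cm l).2.1) := rfl
      rw [hc]
      simp only []
      refine ⟨by nlinarith, by omega, ?_⟩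
      show (b : ℚ) - (hj l)⁻¹ = _
      rw [h3, inv_div]
      have hαQ : ((cm l).1 : ℚ) ≠ 0 := by exact_mod_cast (by omega : (cm l).1 ≠ 0)
      field_simp
      norm_cast

/-- Proposition 2.2(3), numerically: for all integers `d ≥ 1` and `n > a ≥ 1` with
`gcd(n, a) = 1`, some list in 𝒯 has Hirzebruch–Jung value `d·n²/(d·n·a−1)`. -/
theorem classT_complete (d n a : ℤ) (hd : 1 ≤ d) (hna : a < n) (ha : 1 ≤ a)
    (hcop : Int.gcd n a = 1) :
    ∃ L : List ℤ, ClassT L ∧ hj L = (d * n ^ 2 : ℚ) / (d * n * a - 1) := by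
  obtain ⟨L, hL, hcm⟩ := key n.toNat d n a hd ha hna hcop le_rfl
  refine ⟨L, hL, ?_⟩
  obtain ⟨-, -, h3⟩ := hj_eq_cm L (classT_two_le hL)
  rw [h3, hcm]
  simp only []
  push_cast
  ring
end
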